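/- Let δ ∈ (0,1] and ζ < 0, and let ν be the density ν(x) = κ/a(x) · exp(∫₀^x 2b(y)/a(y) dy) on ℝ, where b(x) = μ[(x+ζ)⁻ + ζ], a(x) = μ[1 + 1(x > −1/δ)(1 − δ((x+ζ)⁻ + ζ))], and κ > 0 normalizes ν to integrate to 1. Then ν(x) ≤ 4 for all x ∈ ℝ. -/

import Mathlib

open Real MeasureTheory

theorem density_Y_bound (δ ζ μ κ : ℝ) (hδ0 : 0 < δ) (hδ1 : δ ≤ 1) (hζ : ζ < 0) (hμ : 0 < μ)
    (hκ : 0 < κ)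
    (b a ν : ℝ → ℝ)
    (hb : ∀ x, b x = μ * (max (-(x + ζ)) 0 + ζ))
    (ha : ∀ x, a x =
      μ * (1 + (if x > -1 / δ then (1 : ℝ) else 0) * (1 - δ * (max (-(x + ζ)) 0 + ζ))))
    (hν : ∀ x, ν x = κ / a x * Real.exp (∫ y in (0 : ℝ)..x, 2 * b y / a y))
    (hnorm : ∫ x, ν x = 1) :
    ∀ x : ℝ, ν x ≤ 4 := by
  have hδinv : -1 / δ ≤ -1 := by
    rw [div_le_iff₀ hδ0]; nlinarith
  -- a x ≥ μ for all x
  have ha_ge : ∀ x, μ ≤ a x := by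
    intro x
    rw [ha x]
    rcases lt_or_ge (-1 / δ) x with h | h
    · rw [if_pos h]
      have hs : 0 ≤ 1 - δ * (max (-(x + ζ)) 0 + ζ) := by
        rcases le_total (-(x + ζ)) 0 with h1 | h1
        · rw [max_eq_right h1]; nlinarith
        · rw [max_eq_left h1]
          have : δ * x > δ * (-1 / δ) := by exact mul_lt_mul_of_pos_left h hδ0
          have h2 : δ * (-1 / δ) = -1 := by field_simp
          nlinarith
      nlinarith
    · rw [if_neg (not_lt.mpr h)]; nlinarith
  have ha_pos : ∀ x, 0 < a x := fun x => lt_of_lt_of_le hμ (ha_ge x)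
  -- a x = μ * (2 + δ * x) on [-1, 0]
  have ha_eq : ∀ x ∈ Set.Icc (-1 : ℝ) 0, a x = μ * (2 + δ * x) := by
    rintro x ⟨hx1, hx2⟩
    rw [ha x]
    have hmax : max (-(x + ζ)) 0 = -(x + ζ) := max_eq_left (by nlinarith)
    rw [hmax]
    rcases lt_or_ge (-1 / δ) x with h | h
    · rw [if_pos h]; ring
    · rw [if_neg (not_lt.mpr h)]
      have hx : x = -1 / δ := le_antisymm h (by linarith)
      have : δ * x = -1 := by rw [hx]; field_simp
      nlinarith
  -- b x = -μ * x for x ≤ 0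
  have hb_eq : ∀ x ≤ (0 : ℝ), b x = μ * (-x) := by
    intro x hx
    rw [hb x, max_eq_left (by nlinarith)]; ring
  -- b x ≤ 0 for x ≥ 0
  have hb_nonpos : ∀ x, 0 ≤ x → b x ≤ 0 := by
    intro x hx
    rw [hb x]
    rcases le_total (-(x + ζ)) 0 with h1 | h1
    · rw [max_eq_right h1]; nlinarith
    · rw [max_eq_left h1]; nlinarith
  -- the exponent is ≤ 0
  have hg_le : ∀ x, (∫ y in (0 : ℝ)..x, 2 * b y / a y) ≤ 0 := by
    intro x
    rcases le_total 0 x with h | h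
    · have : 0 ≤ ∫ y in (0 : ℝ)..x, -(2 * b y / a y) := by
        apply intervalIntegral.integral_nonneg h
        intro u hu
        have : 2 * b u / a u ≤ 0 :=
          div_nonpos_iff.mpr (Or.inr ⟨by nlinarith [hb_nonpos u hu.1], (ha_pos u).le⟩)
        linarith
      rw [intervalIntegral.integral_neg] at this
      linarith
    · rw [intervalIntegral.integral_symm]
      have : 0 ≤ ∫ y in x..(0 : ℝ), 2 * b y / a y := by
        apply intervalIntegral.integral_nonneg h
        intro u hu
        have hbu : 0 ≤ b u := by rw [hb_eq u hu.2]; nlinarith [hu.2]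
        exact div_nonneg (by nlinarith) (ha_pos u).le
      linarith
  -- global upper bound ν ≤ κ / μ
  have hν_le : ∀ x, ν x ≤ κ / μ := by
    intro x
    rw [hν x]
    have h1 : Real.exp (∫ y in (0 : ℝ)..x, 2 * b y / a y) ≤ 1 :=
      Real.exp_le_one_iff.mpr (hg_le x)
    have h2 : κ / a x ≤ κ / μ := div_le_div_of_nonneg_left hκ.le hμ (ha_ge x)
    calc κ / a x * Real.exp (∫ y in (0 : ℝ)..x, 2 * b y / a y)
        ≤ κ / a x * 1 :=
          mul_le_mul_of_nonneg_left h1 (div_nonneg hκ.le (ha_pos x).le)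
      _ = κ / a x := mul_one _
      _ ≤ κ / μ := h2
  have hν_nonneg : ∀ x, 0 ≤ ν x := by
    intro x; rw [hν x]
    exact mul_nonneg (div_nonneg hκ.le (ha_pos x).le) (Real.exp_pos _).le
  -- integrability of ν
  have hint : Integrable ν := by
    by_contra h
    rw [integral_undef h] at hnorm
    norm_num at hnorm
  -- lower bound on [-1, 0]
  have hlow : ∀ x ∈ Set.Icc (-1 : ℝ) 0, κ / (2 * μ) * (1 - x ^ 2) ≤ ν x := by
    rintro x hx
    obtain ⟨hx1, hx2⟩ := hx
    rw [hν x]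
    have haux : a x = μ * (2 + δ * x) := ha_eq x ⟨hx1, hx2⟩
    have ha_le : a x ≤ 2 * μ := by
      rw [haux]
      nlinarith [mul_nonneg (mul_nonneg hμ.le hδ0.le) (neg_nonneg.mpr hx2)]
    have h1 : κ / (2 * μ) ≤ κ / a x :=
      div_le_div_of_nonneg_left hκ.le (ha_pos x) ha_le
    -- g x ≥ -x^2
    have hg_ge : -x ^ 2 ≤ ∫ y in (0 : ℝ)..x, 2 * b y / a y := by
      rw [intervalIntegral.integral_symm]
      have hInt1 : IntervalIntegrable (fun y => 2 * b y / a y) volume x 0 := by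
        apply ContinuousOn.intervalIntegrable
        have hsub : Set.uIcc x (0 : ℝ) ⊆ Set.Icc (-1 : ℝ) 0 := by
          rw [Set.uIcc_of_le hx2]
          exact Set.Icc_subset_Icc hx1 le_rfl
        apply ContinuousOn.congr
            (f := fun y => 2 * (μ * (-y)) / (μ * (2 + δ * y)))
        · apply ContinuousOn.div
          · fun_prop
          · fun_prop
          · intro y hy
            have hy' := hsub hy
            have : 2 + δ * y ≥ 1 := by
              have := hy'.1; nlinarith
            positivity
        · intro y hy
          have hy' := hsub hy
          show 2 * b y / a y = 2 * (μ * (-y)) / (μ * (2 + δ * y))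
          rw [hb_eq y hy'.2, ha_eq y hy']
      have hInt2 : IntervalIntegrable (fun y : ℝ => -2 * y) volume x 0 := by
        apply ContinuousOn.intervalIntegrable; fun_prop
      have hmono : (∫ y in x..(0 : ℝ), 2 * b y / a y) ≤ ∫ y in x..(0 : ℝ), -2 * y := by
        apply intervalIntegral.integral_mono_on hx2 hInt1 hInt2
        intro u hu
        have hu1 := hu.1; have hu2 := hu.2
        rw [hb_eq u hu2, ha_eq u ⟨le_trans hx1 hu1, hu2⟩]
        have hden : (1 : ℝ) ≤ 2 + δ * u := by nlinarith [le_trans hx1 hu1]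
        have : 2 * (μ * (-u)) / (μ * (2 + δ * u)) = (-2 * u) / (2 + δ * u) := by
          field_simp
        rw [this]
        exact div_le_self (by nlinarith) hden
      have hval : (∫ y in x..(0 : ℝ), -2 * y) = x ^ 2 := by
        rw [intervalIntegral.integral_const_mul, integral_id]
        ring
      rw [hval] at hmono
      linarith
    have h2 : 1 - x ^ 2 ≤ Real.exp (∫ y in (0 : ℝ)..x, 2 * b y / a y) := by
      calc 1 - x ^ 2 ≤ 1 + ∫ y in (0 : ℝ)..x, 2 * b y / a y := by linarith
        _ ≤ Real.exp (∫ y in (0 : ℝ)..x, 2 * b y / a y) := by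
            linarith [Real.add_one_le_exp (∫ y in (0 : ℝ)..x, 2 * b y / a y)]
    have hx2nn : 0 ≤ 1 - x ^ 2 := by nlinarith
    exact mul_le_mul h1 h2 hx2nn (div_nonneg hκ.le (ha_pos x).le)
  -- κ ≤ 3 μ
  have hκle : κ ≤ 3 * μ := by
    have h1 : (∫ x in Set.Icc (-1 : ℝ) 0, ν x) ≤ 1 := by
      rw [← hnorm]
      exact setIntegral_le_integral hint (Filter.Eventually.of_forall hν_nonneg)
    have h2 : (∫ x in Set.Icc (-1 : ℝ) 0, κ / (2 * μ) * (1 - x ^ 2)) ≤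
        ∫ x in Set.Icc (-1 : ℝ) 0, ν x := by
      apply setIntegral_mono_on
      · apply Continuous.integrableOn_Icc
        fun_prop
      · exact hint.integrableOn
      · exact measurableSet_Icc
      · exact hlow
    have h3 : (∫ x in Set.Icc (-1 : ℝ) 0, κ / (2 * μ) * (1 - x ^ 2)) = κ / (3 * μ) := by
      rw [integral_Icc_eq_integral_Ioc, ← intervalIntegral.integral_of_le (by norm_num : (-1:ℝ) ≤ 0)]
      rw [intervalIntegral.integral_const_mul]
      have : (∫ x in (-1 : ℝ)..0, (1 - x ^ 2)) = 2 / 3 := by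
        rw [intervalIntegral.integral_sub intervalIntegrable_const
            (intervalIntegral.intervalIntegrable_pow 2)]
        simp [integral_pow]
        norm_num
      rw [this]
      field_simp
    rw [h3] at h2
    have : κ / (3 * μ) ≤ 1 := le_trans h2 h1
    calc κ = κ / (3 * μ) * (3 * μ) := by field_simp
      _ ≤ 1 * (3 * μ) := by apply mul_le_mul_of_nonneg_right this (by positivity)
      _ = 3 * μ := one_mul _
  intro x
  calc ν x ≤ κ / μ := hν_le x
    _ ≤ 4 := (div_le_iff₀ hμ).mpr (by nlinarith)
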